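/- For every x ∈ [0,1], the sequence of ordered graphs Q(n,x) satisfies: the edge density tends to x, and the density of the ordered path M in Q(n,x) tends to 6η³ + 6(1-2η)η² if η ≤ 1/2, and to 2η³ - 6η² + 6η - 1 if η ≥ 1/2, where η = 1 - sqrt(1-x). -/

import Mathlib

open Finset

-- The right-degree of vertex `i` in an ordered graph on `Fin n`:
-- the number of neighbors `j` with `i < j`.
open scoped Classical in
noncomputable def rdeg {n : ℕ} (G : SimpleGraph (Fin n)) (i : Fin n) : ℕ :=
  (Finset.univ.filter fun j => G.Adj i j ∧ i < j).card

-- The number of copies of the ordered left star `S_L(k)` in an ordered graph on `Fin n`: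
-- sets of `k+1` vertices whose minimum is adjacent to all the others.
open scoped Classical in
noncomputable def leftStarCount {n : ℕ} (G : SimpleGraph (Fin n)) (k : ℕ) : ℕ :=
  ((Finset.univ : Finset (Finset (Fin n))).filter fun s =>
    s.card = k + 1 ∧ ∃ v ∈ s, (∀ w ∈ s, v ≤ w) ∧ ∀ w ∈ s, w ≠ v → G.Adj v w).card

-- The number of edges of an ordered graph on `Fin n`.
open scoped Classical in
noncomputable def ecount {n : ℕ} (G : SimpleGraph (Fin n)) : ℕ :=
  (Finset.univ.filter fun p : Fin n × Fin n => p.1 < p.2 ∧ G.Adj p.1 p.2).card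

-- The number of copies of the ordered path `M` (edges 12, 23) in an ordered graph.
open scoped Classical in
noncomputable def mcount {n : ℕ} (G : SimpleGraph (Fin n)) : ℕ :=
  (Finset.univ.filter fun t : Fin n × Fin n × Fin n =>
    t.1 < t.2.1 ∧ t.2.1 < t.2.2 ∧ G.Adj t.1 t.2.1 ∧ G.Adj t.2.1 t.2.2).card

-- The ordered graph `Q(n,x)` on `[n]` with edges `ij` whenever `j - i ≤ ⌊(1-√(1-x))·n⌋`.
noncomputable def Qgraph (n : ℕ) (x : ℝ) : SimpleGraph (Fin n) :=
  SimpleGraph.fromRel fun v w =>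
    v.val < w.val ∧ w.val - v.val ≤ ⌊(1 - Real.sqrt (1 - x)) * (n : ℝ)⌋₊

/-! ### Auxiliary arithmetic lemmas -/

lemma aux_choose3_mul (n : ℕ) : n.choose 3 * 6 = n * (n-1) * (n-2) := by
  have := Nat.descFactorial_eq_factorial_mul_choose n 3
  rw [show Nat.factorial 3 = 6 from rfl] at this
  rw [Nat.descFactorial_succ, Nat.descFactorial_succ, Nat.descFactorial_succ,
    Nat.descFactorial_zero] at this
  rw [mul_comm, ← this]
  simp [Nat.sub_zero]
  ring

lemma aux_cast_choose3 (n : ℕ) (h : 2 ≤ n) : ((n.choose 3 : ℕ) : ℝ) = n*(n-1)*(n-2)/6 := by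
  have h6 := aux_choose3_mul n
  have h7 : ((n.choose 3 * 6 : ℕ) : ℝ) = ((n * (n-1) * (n-2) : ℕ) : ℝ) := by rw [h6]
  push_cast [Nat.cast_sub (by omega : 1 ≤ n), Nat.cast_sub (by omega : 2 ≤ n)] at h7
  linarith

lemma aux_sum_succ_id (K : ℕ) : ∑ e ∈ range K, (e + 1) = (K+1).choose 2 := by
  induction K with
  | zero => simp
  | succ c ih =>
    rw [Finset.sum_range_succ, ih]
    have h := Nat.choose_succ_succ' (c+1) 1
    norm_num [Nat.choose_one_right] at h ⊢
    omega

lemma aux_sum_desc' (K : ℕ) : ∑ e ∈ range K, (K - e) = (K+1).choose 2 := by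
  rw [← aux_sum_succ_id K, ← Finset.sum_range_reflect (fun e => e + 1) K]
  apply Finset.sum_congr rfl; intro e he; simp only [Finset.mem_range] at he; omega

lemma aux_sumH (K a : ℕ) (ha : K ≤ a) : ∑ e ∈ range a, (K - e) = (K+1).choose 2 := by
  induction a with
  | zero => simp at ha; simp [ha]
  | succ b ih =>
    rcases Nat.lt_or_ge K (b+1) with h | h
    · rw [Finset.sum_range_succ, ih (by omega), Nat.sub_eq_zero_of_le (by omega), add_zero]
    · have hK : K = b + 1 := by omega
      subst hK
      exact aux_sum_desc' (b+1)

lemma aux_hockey (b : ℕ) : ∑ e ∈ range b, (e+2).choose 2 = (b+2).choose 3 := by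
  induction b with
  | zero => simp
  | succ c ih =>
    rw [Finset.sum_range_succ, ih]
    have h := Nat.choose_succ_succ' (c+2) 2
    norm_num at h
    rw [show c+2+1 = c+1+2 from by omega] at h
    omega

lemma aux_sumG (b a : ℕ) (ha : b ≤ a) :
    ∑ e1 ∈ range a, ∑ e2 ∈ range a, (b - e1 - e2) = (b+2).choose 3 := by
  induction a with
  | zero =>
    simp at ha; simp [ha]
  | succ c ih =>
    rcases Nat.lt_or_ge b (c+1) with h | h
    · have hbc : b ≤ c := by omega
      rw [Finset.sum_range_succ]
      have hz : ∀ e1 ∈ range c, ∑ e2 ∈ range (c+1), (b - e1 - e2)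
          = ∑ e2 ∈ range c, (b - e1 - e2) := by
        intro e1 _
        rw [Finset.sum_range_succ, show b - e1 - c = 0 by omega, add_zero]
      rw [Finset.sum_congr rfl hz]
      have hzero : ∑ e2 ∈ range (c+1), (b - c - e2) = 0 := by
        apply Finset.sum_eq_zero; intro e2 _; omega
      rw [hzero, add_zero, ih hbc]
    · have hb : b = c + 1 := by omega
      subst hb
      have inner : ∀ e1 ∈ range (c+1), ∑ e2 ∈ range (c+1), (c+1 - e1 - e2)
          = ((c+1-e1)+1).choose 2 := by
        intro e1 he1
        rw [← aux_sumH (c+1-e1) (c+1) (by omega)]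
      rw [Finset.sum_congr rfl inner]
      have hr := Finset.sum_range_reflect (fun e => (e+2).choose 2) (c+1)
      rw [← aux_hockey (c+1), ← hr]
      apply Finset.sum_congr rfl; intro e he; simp only [Finset.mem_range] at he
      congr 1; omega

lemma aux_sum_Icc_reflect (m : ℕ) (f : ℕ → ℕ) :
    ∑ d ∈ Icc 1 m, f d = ∑ e ∈ range m, f (m - e) := by
  apply Finset.sum_nbij' (i := fun d => m - d) (j := fun e => m - e)
  · intro d hd; simp only [Finset.mem_Icc] at hd; simp only [Finset.mem_range]; omega
  · intro e he; simp only [Finset.mem_range] at he; simp only [Finset.mem_Icc]; omega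
  · intro d hd; simp only [Finset.mem_Icc] at hd; omega
  · intro e he; simp only [Finset.mem_range] at he; omega
  · intro d hd; simp only [Finset.mem_Icc] at hd; congr 1; omega

lemma aux_corr (m n : ℕ) (h : m ≤ n) :
    ∑ d1 ∈ Icc 1 m, ∑ d2 ∈ Icc 1 m, (d1 + d2 - n) = ((2*m - n)+2).choose 3 := by
  rw [aux_sum_Icc_reflect m (fun d1 => ∑ d2 ∈ Icc 1 m, (d1 + d2 - n))]
  have step1 : ∀ e1 ∈ range m, ∑ d2 ∈ Icc 1 m, (m - e1 + d2 - n)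
      = ∑ e2 ∈ range m, (2*m - n - e1 - e2) := by
    intro e1 he1
    rw [aux_sum_Icc_reflect m (fun d2 => m - e1 + d2 - n)]
    apply Finset.sum_congr rfl
    intro e2 he2
    simp only [Finset.mem_range] at he1 he2
    omega
  rw [Finset.sum_congr rfl step1]
  exact aux_sumG (2*m - n) m (by omega)

lemma aux_castsub (a b : ℕ) : ((a - b : ℕ) : ℝ) = (a:ℝ) - b + ((b - a : ℕ):ℝ) := by
  rcases le_total b a with h | h
  · rw [Nat.cast_sub h, Nat.sub_eq_zero_of_le h]; simp
  · rw [Nat.cast_sub h, Nat.sub_eq_zero_of_le h]; push_cast; ring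

lemma aux_gaussIcc (m : ℕ) : ∑ d ∈ Icc 1 m, (d:ℝ) = m*(m+1)/2 := by
  induction m with
  | zero => simp
  | succ c ih =>
    rw [show Icc 1 (c+1) = insert (c+1) (Icc 1 c) by
      ext y; simp [Finset.mem_Icc]; omega]
    rw [Finset.sum_insert (by simp), ih]
    push_cast; ring

/-! ### Combinatorial identities for `Qgraph` -/

lemma aux_qadj {n : ℕ} {x : ℝ} {a b : Fin n} (h : a < b) :
    (Qgraph n x).Adj a b ↔ b.val - a.val ≤ ⌊(1 - Real.sqrt (1 - x)) * (n : ℝ)⌋₊ := by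
  have hv : a.val < b.val := h
  constructor
  · rintro ⟨hne, (⟨_, h2⟩ | ⟨h1, _⟩)⟩
    · exact h2
    · omega
  · intro hle
    exact ⟨Fin.ne_of_lt h, Or.inl ⟨hv, hle⟩⟩

open scoped Classical in
lemma aux_ecount_eq (n : ℕ) (x : ℝ) :
    ecount (Qgraph n x) = ∑ d ∈ Icc 1 ⌊(1 - Real.sqrt (1 - x)) * (n : ℝ)⌋₊, (n - d) := by
  classical
  set m := ⌊(1 - Real.sqrt (1 - x)) * (n : ℝ)⌋₊ with hm
  rw [ecount]
  rw [Finset.card_eq_sum_card_fiberwise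
    (f := fun p : Fin n × Fin n => p.2.val - p.1.val) (t := Icc 1 m) ?_]
  · apply Finset.sum_congr rfl
    intro d hd
    simp only [Finset.mem_Icc] at hd
    rw [← Finset.card_range (n - d)]
    apply Finset.card_bij' (fun p _ => p.1.val)
      (fun i hi => (⟨i, by simp only [Finset.mem_range] at hi; omega⟩,
                    ⟨i + d, by simp only [Finset.mem_range] at hi; omega⟩))
    case hi =>
      intro p hp
      simp only [Finset.mem_filter, Finset.mem_univ, true_and] at hp
      obtain ⟨⟨hlt, hadj⟩, hfd⟩ := hp
      have : p.1.val < p.2.val := hlt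
      have h2 : p.2.val < n := p.2.isLt
      simp only [Finset.mem_range]
      omega
    case hj =>
      intro i hi
      simp only [Finset.mem_range] at hi
      simp only [Finset.mem_filter, Finset.mem_univ, true_and]
      refine ⟨⟨Fin.mk_lt_mk.mpr (by omega), ?_⟩, by simp⟩
      rw [aux_qadj (Fin.mk_lt_mk.mpr (by omega))]
      simp only [← hm]
      omega
    case left_inv =>
      intro p hp
      simp only [Finset.mem_filter, Finset.mem_univ, true_and] at hp
      obtain ⟨⟨hlt, hadj⟩, hfd⟩ := hp
      have hv : p.1.val < p.2.val := hlt
      have h2 : p.2.val < n := p.2.isLt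
      refine Prod.ext ?_ ?_ <;> apply Fin.ext <;> simp <;> omega
    case right_inv =>
      intro i hi
      simp
  · intro p hp
    simp only [Finset.mem_coe, Finset.mem_filter, Finset.mem_univ, true_and] at hp
    obtain ⟨hlt, hadj⟩ := hp
    have hv : p.1.val < p.2.val := hlt
    rw [aux_qadj hlt] at hadj
    simp only [Finset.mem_coe, Finset.mem_Icc, ← hm]
    omega

open scoped Classical in
lemma aux_mcount_eq (n : ℕ) (x : ℝ) :
    mcount (Qgraph n x) = ∑ d1 ∈ Icc 1 ⌊(1 - Real.sqrt (1 - x)) * (n : ℝ)⌋₊,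
      ∑ d2 ∈ Icc 1 ⌊(1 - Real.sqrt (1 - x)) * (n : ℝ)⌋₊, (n - d1 - d2) := by
  classical
  set m := ⌊(1 - Real.sqrt (1 - x)) * (n : ℝ)⌋₊ with hm
  rw [mcount, ← Finset.sum_product (Icc 1 m) (Icc 1 m) (fun q => n - q.1 - q.2)]
  rw [Finset.card_eq_sum_card_fiberwise
    (f := fun t : Fin n × Fin n × Fin n => (t.2.1.val - t.1.val, t.2.2.val - t.2.1.val))
    (t := (Icc 1 m) ×ˢ (Icc 1 m)) ?_]
  · apply Finset.sum_congr rfl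
    intro q hq
    simp only [Finset.mem_product, Finset.mem_Icc] at hq
    obtain ⟨⟨hq1, hq1m⟩, hq2, hq2m⟩ := hq
    rw [← Finset.card_range (n - q.1 - q.2)]
    apply Finset.card_bij' (fun t _ => t.1.val)
      (fun i hi => (⟨i, by simp only [Finset.mem_range] at hi; omega⟩,
                    ⟨i + q.1, by simp only [Finset.mem_range] at hi; omega⟩,
                    ⟨i + q.1 + q.2, by simp only [Finset.mem_range] at hi; omega⟩))
    case hi =>
      intro t ht
      simp only [Finset.mem_filter, Finset.mem_univ, true_and] at ht
      obtain ⟨⟨h12, h23, _, _⟩, hfd⟩ := ht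
      have hv1 : t.1.val < t.2.1.val := h12
      have hv2 : t.2.1.val < t.2.2.val := h23
      have h3 : t.2.2.val < n := t.2.2.isLt
      have hpe := Prod.ext_iff.mp hfd
      simp only [Finset.mem_range]
      simp only [] at hpe
      omega
    case hj =>
      intro i hi
      simp only [Finset.mem_range] at hi
      simp only [Finset.mem_filter, Finset.mem_univ, true_and]
      refine ⟨⟨Fin.mk_lt_mk.mpr (by omega), Fin.mk_lt_mk.mpr (by omega), ?_, ?_⟩, by simp⟩
      · rw [aux_qadj (Fin.mk_lt_mk.mpr (by omega))]
        simp only [← hm]; omega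
      · rw [aux_qadj (Fin.mk_lt_mk.mpr (by omega))]
        simp only [← hm]; omega
    case left_inv =>
      intro t ht
      simp only [Finset.mem_filter, Finset.mem_univ, true_and] at ht
      obtain ⟨⟨h12, h23, _, _⟩, hfd⟩ := ht
      have hv1 : t.1.val < t.2.1.val := h12
      have hv2 : t.2.1.val < t.2.2.val := h23
      have hpe := Prod.ext_iff.mp hfd
      simp only [] at hpe
      refine Prod.ext ?_ (Prod.ext ?_ ?_) <;> apply Fin.ext <;> simp <;> omega
    case right_inv =>
      intro i hi
      simp
  · intro t ht
    simp only [Finset.mem_coe, Finset.mem_filter, Finset.mem_univ, true_and] at ht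
    obtain ⟨h12, h23, ha1, ha2⟩ := ht
    have hv1 : t.1.val < t.2.1.val := h12
    have hv2 : t.2.1.val < t.2.2.val := h23
    rw [aux_qadj h12] at ha1
    rw [aux_qadj h23] at ha2
    simp only [Finset.mem_coe, Finset.mem_product, Finset.mem_Icc, ← hm]
    constructor <;> constructor <;> omega

/-! ### Cast formulas -/

lemma aux_ecount_cast (n : ℕ) (x : ℝ)
    (hmn : ⌊(1 - Real.sqrt (1 - x)) * (n : ℝ)⌋₊ ≤ n) :
    (ecount (Qgraph n x) : ℝ)
      = (⌊(1 - Real.sqrt (1 - x)) * (n : ℝ)⌋₊ : ℝ) * n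
        - (⌊(1 - Real.sqrt (1 - x)) * (n : ℝ)⌋₊ : ℝ)
          * ((⌊(1 - Real.sqrt (1 - x)) * (n : ℝ)⌋₊ : ℝ) + 1) / 2 := by
  set m := ⌊(1 - Real.sqrt (1 - x)) * (n : ℝ)⌋₊ with hm
  rw [aux_ecount_eq n x, ← hm]
  push_cast
  have hterm : ∀ d ∈ Icc 1 m, ((n - d : ℕ) : ℝ) = (n:ℝ) - (d:ℝ) := by
    intro d hd
    simp only [Finset.mem_Icc] at hd
    rw [Nat.cast_sub (by omega)]
  rw [Finset.sum_congr rfl hterm, Finset.sum_sub_distrib, Finset.sum_const, Nat.card_Icc,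
    aux_gaussIcc, nsmul_eq_mul]
  have : ((m + 1 - 1 : ℕ) : ℝ) = (m : ℝ) := by push_cast [Nat.add_sub_cancel]; ring
  rw [this]

lemma aux_mcount_cast (n : ℕ) (x : ℝ)
    (hmn : ⌊(1 - Real.sqrt (1 - x)) * (n : ℝ)⌋₊ ≤ n) :
    (mcount (Qgraph n x) : ℝ)
      = (⌊(1 - Real.sqrt (1 - x)) * (n : ℝ)⌋₊ : ℝ)^2 * n
        - (⌊(1 - Real.sqrt (1 - x)) * (n : ℝ)⌋₊ : ℝ)^2
          * ((⌊(1 - Real.sqrt (1 - x)) * (n : ℝ)⌋₊ : ℝ) + 1)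
        + (((2 * ⌊(1 - Real.sqrt (1 - x)) * (n : ℝ)⌋₊ - n + 2).choose 3 : ℕ) : ℝ) := by
  set m := ⌊(1 - Real.sqrt (1 - x)) * (n : ℝ)⌋₊ with hm
  rw [aux_mcount_eq n x, ← hm]
  push_cast
  have hterm : ∀ d1 ∈ Icc 1 m, ∀ d2 ∈ Icc 1 m,
      ((n - d1 - d2 : ℕ) : ℝ) = ((n:ℝ) - d1 - d2) + ((d1 + d2 - n : ℕ) : ℝ) := by
    intro d1 _ d2 _
    rw [Nat.sub_sub, aux_castsub n (d1+d2)]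
    push_cast; ring
  rw [Finset.sum_congr rfl (fun d1 hd1 => Finset.sum_congr rfl (hterm d1 hd1))]
  have hsplit : ∑ d1 ∈ Icc 1 m, ∑ d2 ∈ Icc 1 m,
      (((n:ℝ) - d1 - d2) + ((d1 + d2 - n : ℕ) : ℝ))
      = (∑ d1 ∈ Icc 1 m, ∑ d2 ∈ Icc 1 m, ((n:ℝ) - d1 - d2))
        + ∑ d1 ∈ Icc 1 m, ∑ d2 ∈ Icc 1 m, ((d1 + d2 - n : ℕ) : ℝ) := by
    rw [← Finset.sum_add_distrib]
    apply Finset.sum_congr rfl; intros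
    rw [← Finset.sum_add_distrib]
  rw [hsplit]
  have hmain : ∑ d1 ∈ Icc 1 m, ∑ d2 ∈ Icc 1 m, ((n:ℝ) - d1 - d2)
      = (m:ℝ)^2 * n - (m:ℝ)^2 * ((m:ℝ) + 1) := by
    have hinner : ∀ d1 : ℕ, ∑ d2 ∈ Icc 1 m, ((n:ℝ) - d1 - d2)
        = (m:ℝ) * ((n:ℝ) - d1) - (m:ℝ)*((m:ℝ)+1)/2 := by
      intro d1
      rw [Finset.sum_sub_distrib, Finset.sum_const, Nat.card_Icc, aux_gaussIcc, nsmul_eq_mul]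
      have : ((m + 1 - 1 : ℕ) : ℝ) = (m : ℝ) := by push_cast [Nat.add_sub_cancel]; ring
      rw [this]
    rw [Finset.sum_congr rfl (fun d1 _ => hinner d1)]
    rw [Finset.sum_sub_distrib, Finset.sum_const, Nat.card_Icc, nsmul_eq_mul]
    have h1 : ((m + 1 - 1 : ℕ) : ℝ) = (m : ℝ) := by push_cast [Nat.add_sub_cancel]; ring
    rw [h1]
    have h2 : ∑ d1 ∈ Icc 1 m, (m:ℝ) * ((n:ℝ) - d1)
        = (m:ℝ) * ((m:ℝ) * n - (m:ℝ)*((m:ℝ)+1)/2) := by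
      rw [← Finset.mul_sum, Finset.sum_sub_distrib, Finset.sum_const, Nat.card_Icc,
        aux_gaussIcc, nsmul_eq_mul, h1]
    rw [h2]
    ring
  have hcorr : ∑ d1 ∈ Icc 1 m, ∑ d2 ∈ Icc 1 m, ((d1 + d2 - n : ℕ) : ℝ)
      = (((2*m - n + 2).choose 3 : ℕ) : ℝ) := by
    rw [← aux_corr m n hmn]
    push_cast
    rfl
  rw [hmain, hcorr]

lemma aux_floor_div_tendsto (c : ℝ) (hc : 0 ≤ c) :
    Filter.Tendsto (fun n : ℕ => (⌊c * n⌋₊ : ℝ) / n) Filter.atTop (nhds c) := by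
  have hlow : Filter.Tendsto (fun n : ℕ => c - 1/(n:ℝ)) Filter.atTop (nhds c) := by
    have := tendsto_const_nhds (x := c) (f := Filter.atTop (α := ℕ))
      |>.sub tendsto_one_div_atTop_nhds_zero_nat
    simpa using this
  apply tendsto_of_tendsto_of_tendsto_of_le_of_le' hlow tendsto_const_nhds
  · filter_upwards [Filter.eventually_ge_atTop 1] with n hn
    have hn0 : (0:ℝ) < n := by exact_mod_cast hn
    have h1 : c * n - 1 < (⌊c * n⌋₊ : ℝ) := Nat.sub_one_lt_floor (c * n)
    rw [show c - 1/(n:ℝ) = (c * n - 1)/n by field_simp]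
    gcongr
  · filter_upwards [Filter.eventually_ge_atTop 1] with n hn
    have hn0 : (0:ℝ) < n := by exact_mod_cast hn
    rw [div_le_iff₀ hn0]
    exact Nat.floor_le (mul_nonneg hc (Nat.cast_nonneg n))

set_option maxHeartbeats 1600000

/-- The edge density of `Q(n,x)` tends to `x`, and the density of the ordered path `M`
tends to `6η³ + 6(1-2η)η²` if `η ≤ 1/2` and to `2η³ - 6η² + 6η - 1` if `η ≥ 1/2`,
where `η = 1 - √(1-x)`. -/
theorem Qgraph_densities (x : ℝ) (hx : x ∈ Set.Icc (0:ℝ) 1) :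
    Filter.Tendsto (fun n : ℕ => (ecount (Qgraph n x) : ℝ) / (n.choose 2 : ℝ))
      Filter.atTop (nhds x) ∧
    ((1 - Real.sqrt (1 - x) ≤ 1/2 →
      Filter.Tendsto (fun n : ℕ => (mcount (Qgraph n x) : ℝ) / (n.choose 3 : ℝ))
        Filter.atTop
        (nhds (6 * (1 - Real.sqrt (1 - x))^3 +
          6 * (1 - 2 * (1 - Real.sqrt (1 - x))) * (1 - Real.sqrt (1 - x))^2))) ∧
     (1/2 ≤ 1 - Real.sqrt (1 - x) →
      Filter.Tendsto (fun n : ℕ => (mcount (Qgraph n x) : ℝ) / (n.choose 3 : ℝ))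
        Filter.atTop
        (nhds (2 * (1 - Real.sqrt (1 - x))^3 - 6 * (1 - Real.sqrt (1 - x))^2 +
          6 * (1 - Real.sqrt (1 - x)) - 1)))) := by
  obtain ⟨hx0, hx1⟩ := hx
  have hs0 : 0 ≤ Real.sqrt (1-x) := Real.sqrt_nonneg _
  have hs1 : Real.sqrt (1-x) ≤ 1 := Real.sqrt_le_one.mpr (by linarith)
  have hs2 : Real.sqrt (1-x)^2 = 1 - x := Real.sq_sqrt (by linarith)
  set η : ℝ := 1 - Real.sqrt (1 - x) with hηdef
  have hη0 : 0 ≤ η := by rw [hηdef]; linarith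
  have hη1 : η ≤ 1 := by rw [hηdef]; linarith
  have hMle : ∀ n : ℕ, ⌊η * n⌋₊ ≤ n := by
    intro n
    have h1 : η * n ≤ (n:ℝ) := by nlinarith [Nat.cast_nonneg (α := ℝ) n]
    calc ⌊η*n⌋₊ ≤ ⌊(n:ℝ)⌋₊ := Nat.floor_mono h1
    _ = n := Nat.floor_natCast n
  have ha : Filter.Tendsto (fun n : ℕ => (⌊η*n⌋₊:ℝ)/n) Filter.atTop (nhds η) :=
    aux_floor_div_tendsto η hη0
  have hb : Filter.Tendsto (fun n:ℕ => 1/(n:ℝ)) Filter.atTop (nhds 0) :=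
    tendsto_one_div_atTop_nhds_zero_nat
  refine ⟨?_, ?_, ?_⟩
  · -- edge density
    have hT : Filter.Tendsto (fun n : ℕ =>
        (2*((⌊η*(n:ℝ)⌋₊:ℝ)/n) - ((⌊η*(n:ℝ)⌋₊:ℝ)/n)*(((⌊η*(n:ℝ)⌋₊:ℝ)/n) + 1/(n:ℝ)))
          / (1 - 1/(n:ℝ)))
        Filter.atTop (nhds ((2*η - η*(η+0))/(1-0))) := by
      exact Filter.Tendsto.div ((ha.const_mul 2).sub (ha.mul (ha.add hb)))
        (tendsto_const_nhds.sub hb) (by norm_num)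
    have hlim : (2*η - η*(η+0))/(1-0) = x := by
      rw [hηdef]
      field_simp
      nlinarith [hs2]
    rw [hlim] at hT
    apply hT.congr'
    filter_upwards [Filter.eventually_ge_atTop 2] with n hn
    have h2n : (2:ℝ) ≤ (n:ℝ) := by exact_mod_cast hn
    have hN0 : (n:ℝ) ≠ 0 := by intro h; rw [h] at h2n; linarith
    have hN1 : (n:ℝ) - 1 ≠ 0 := by intro h; nlinarith
    rw [aux_ecount_cast n x (hMle n), Nat.cast_choose_two]
    generalize (⌊η*(n:ℝ)⌋₊ : ℝ) = M
    field_simp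
  · -- path density, η ≤ 1/2
    intro hhalf
    have h2m : ∀ n : ℕ, 2 * ⌊η*(n:ℝ)⌋₊ - n = 0 := by
      intro n
      have h1 : ⌊η*(n:ℝ)⌋₊ ≤ ⌊(n:ℝ)/2⌋₊ :=
        Nat.floor_mono (by nlinarith [Nat.cast_nonneg (α := ℝ) n])
      have h2 : ⌊(n:ℝ)/2⌋₊ = n / 2 := by
        rw [show ((2:ℝ)) = ((2:ℕ):ℝ) by norm_num, Nat.floor_div_natCast, Nat.floor_natCast]
      omega
    have hT : Filter.Tendsto (fun n : ℕ =>
        6*(((⌊η*(n:ℝ)⌋₊:ℝ)/n)^2 - ((⌊η*(n:ℝ)⌋₊:ℝ)/n)^2*(((⌊η*(n:ℝ)⌋₊:ℝ)/n) + 1/(n:ℝ)))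
          / ((1 - 1/(n:ℝ))*(1 - 2*(1/(n:ℝ)))))
        Filter.atTop (nhds (6*(η^2 - η^2*(η+0))/((1-0)*(1-2*0)))) := by
      apply Filter.Tendsto.div
      · exact ((ha.pow 2).sub ((ha.pow 2).mul (ha.add hb))).const_mul 6
      · exact (tendsto_const_nhds.sub hb).mul (tendsto_const_nhds.sub (hb.const_mul 2))
      · norm_num
    have hlim : 6*(η^2 - η^2*(η+0))/((1-0)*(1-2*0)) = 6*η^3 + 6*(1-2*η)*η^2 := by ring
    rw [hlim] at hT
    apply hT.congr'
    filter_upwards [Filter.eventually_ge_atTop 3] with n hn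
    have h3n : (3:ℝ) ≤ (n:ℝ) := by exact_mod_cast hn
    have hN0 : (n:ℝ) ≠ 0 := by intro h; rw [h] at h3n; linarith
    have hN1 : (n:ℝ) - 1 ≠ 0 := by intro h; nlinarith
    have hN2 : (n:ℝ) - 2 ≠ 0 := by intro h; nlinarith
    rw [aux_mcount_cast n x (hMle n), aux_cast_choose3 n (by omega), h2m n]
    rw [show ((0+2 : ℕ).choose 3 : ℝ) = 0 by norm_num [Nat.choose]]
    generalize (⌊η*(n:ℝ)⌋₊ : ℝ) = M
    field_simp
    ring
  · -- path density, η ≥ 1/2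
    intro hhalf
    have h2m1 : ∀ n : ℕ, n ≤ 2 * ⌊η*(n:ℝ)⌋₊ + 1 := by
      intro n
      have h1 : ⌊(n:ℝ)/2⌋₊ ≤ ⌊η*(n:ℝ)⌋₊ :=
        Nat.floor_mono (by nlinarith [Nat.cast_nonneg (α := ℝ) n])
      have h2 : ⌊(n:ℝ)/2⌋₊ = n / 2 := by
        rw [show ((2:ℝ)) = ((2:ℕ):ℝ) by norm_num, Nat.floor_div_natCast, Nat.floor_natCast]
      omega
    have hccast : ∀ n : ℕ, (((2 * ⌊η*(n:ℝ)⌋₊ - n + 2).choose 3 : ℕ) : ℝ)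
        = (2*(⌊η*(n:ℝ)⌋₊:ℝ) - n)*(2*(⌊η*(n:ℝ)⌋₊:ℝ) - n + 1)*(2*(⌊η*(n:ℝ)⌋₊:ℝ) - n + 2)/6 := by
      intro n
      have hle := h2m1 n
      generalize hMg : ⌊η*(n:ℝ)⌋₊ = M at *
      rcases le_or_gt n (2*M) with h | h
      · rw [aux_cast_choose3 (2*M - n + 2) (by omega)]
        push_cast [Nat.cast_sub h]
        ring
      · have hn2 : n = 2*M + 1 := by omega
        rw [show 2*M - n + 2 = 2 by omega]
        rw [show ((2:ℕ).choose 3 : ℝ) = 0 by norm_num [Nat.choose]]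
        have hncast : (n:ℝ) = 2*(M:ℝ) + 1 := by exact_mod_cast congrArg (Nat.cast (R := ℝ)) hn2
        rw [hncast]
        ring
    have hT : Filter.Tendsto (fun n : ℕ =>
        (6*(((⌊η*(n:ℝ)⌋₊:ℝ)/n)^2 - ((⌊η*(n:ℝ)⌋₊:ℝ)/n)^2*(((⌊η*(n:ℝ)⌋₊:ℝ)/n) + 1/(n:ℝ)))
          + (2*((⌊η*(n:ℝ)⌋₊:ℝ)/n) - 1)*(2*((⌊η*(n:ℝ)⌋₊:ℝ)/n) - 1 + 1/(n:ℝ))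
            *(2*((⌊η*(n:ℝ)⌋₊:ℝ)/n) - 1 + 2*(1/(n:ℝ))))
          / ((1 - 1/(n:ℝ))*(1 - 2*(1/(n:ℝ)))))
        Filter.atTop (nhds ((6*(η^2 - η^2*(η+0))
          + (2*η - 1)*(2*η - 1 + 0)*(2*η - 1 + 2*0))/((1-0)*(1-2*0)))) := by
      apply Filter.Tendsto.div
      · apply Filter.Tendsto.add
        · exact ((ha.pow 2).sub ((ha.pow 2).mul (ha.add hb))).const_mul 6
        · exact (((ha.const_mul 2).sub tendsto_const_nhds).mul
            (((ha.const_mul 2).sub tendsto_const_nhds).add hb)).mul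
            (((ha.const_mul 2).sub tendsto_const_nhds).add (hb.const_mul 2))
      · exact (tendsto_const_nhds.sub hb).mul (tendsto_const_nhds.sub (hb.const_mul 2))
      · norm_num
    have hlim : (6*(η^2 - η^2*(η+0)) + (2*η - 1)*(2*η - 1 + 0)*(2*η - 1 + 2*0))
        /((1-0)*(1-2*0)) = 2*η^3 - 6*η^2 + 6*η - 1 := by ring
    rw [hlim] at hT
    apply hT.congr'
    filter_upwards [Filter.eventually_ge_atTop 3] with n hn
    have h3n : (3:ℝ) ≤ (n:ℝ) := by exact_mod_cast hn
    have hN0 : (n:ℝ) ≠ 0 := by intro h; rw [h] at h3n; linarith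
    have hN1 : (n:ℝ) - 1 ≠ 0 := by intro h; nlinarith
    have hN2 : (n:ℝ) - 2 ≠ 0 := by intro h; nlinarith
    rw [aux_mcount_cast n x (hMle n), aux_cast_choose3 n (by omega), hccast n]
    generalize (⌊η*(n:ℝ)⌋₊ : ℝ) = M
    field_simp
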